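/- Fix θ ∈ ℤ. Let P be a measure on ℤ. Then ∑_n E(n) f_P(n) ≤ 1 holds for every e-value E for 𝒟_θ if and only if P is a subprobability measure (P(ℤ) ≤ 1) and there exists a probability measure P′ ∈ 𝒟_θ with f_P(n) ≤ f_{P′}(n) for all n ∈ ℤ. Consequently, a probability measure Q on ℤ satisfies ∑_n E(n) f_Q(n) ≤ 1 for every e-value E for 𝒟_θ if and only if Q ∈ 𝒟_θ. -/

import Mathlib

open MeasureTheory ENNReal

/-- `𝒟_θ`: θ-unimodal probability distributions on `ℤ`. -/
def UnimodalClass (θ : ℤ) : Set (Measure ℤ) :=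
  {P | IsProbabilityMeasure P ∧ (∀ n : ℤ, n ≤ θ → P {n - 1} ≤ P {n}) ∧
    (∀ n : ℤ, θ ≤ n → P {n + 1} ≤ P {n})}

/-- An e-value for `𝒟_θ`. -/
def IsEValueD (θ : ℤ) (E : ℤ → NNReal) : Prop :=
  ∀ P ∈ UnimodalClass θ, ∑' n : ℤ, (E n : ℝ≥0∞) * P {n} ≤ 1


namespace Stmt5Aux

lemma mono_left {θ : ℤ} {g : ℤ → ℝ≥0∞} (hg : ∀ n : ℤ, n ≤ θ → g (n - 1) ≤ g n)
    {m n : ℤ} (hmn : m ≤ n) (hn : n ≤ θ) : g m ≤ g n := by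
  refine Int.le_induction (motive := fun k _ => k ≤ θ → g m ≤ g k) (fun _ => le_rfl) ?_ n hmn hn
  intro k hmk ih hk
  exact (ih (by omega)).trans (by simpa using hg (k + 1) hk)

lemma mono_right {θ : ℤ} {g : ℤ → ℝ≥0∞} (hg : ∀ n : ℤ, θ ≤ n → g (n + 1) ≤ g n)
    {m n : ℤ} (hnm : n ≤ m) (hn : θ ≤ n) : g m ≤ g n := by
  refine Int.le_induction (motive := fun k _ => g k ≤ g n) le_rfl ?_ m hnm
  intro k hnk ih
  exact le_trans (hg k (hn.trans hnk)) ih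

lemma exists_max {f : ℤ → ℝ≥0∞} (hf : ∑' n, f n ≠ ⊤) (S : Set ℤ) {a : ℤ} (ha : a ∈ S) :
    ∃ m ∈ S, ∀ k ∈ S, f k ≤ f m := by
  by_cases h : ∀ k ∈ S, f k ≤ f a
  · exact ⟨a, ha, h⟩
  push_neg at h
  obtain ⟨b, hb, hab⟩ := h
  have hb0 : f b ≠ 0 := fun h0 => by simp [h0] at hab
  have hfin : {k | f b ≤ f k}.Finite := ENNReal.finite_const_le_of_tsum_ne_top hf hb0
  have hTfin : (S ∩ {k | f b ≤ f k}).Finite := hfin.inter_of_right S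
  obtain ⟨m, hm, hmax⟩ := Set.exists_max_image _ f hTfin ⟨b, hb, le_refl (f b)⟩
  refine ⟨m, hm.1, fun k hk => ?_⟩
  by_cases hkT : f b ≤ f k
  · exact hmax k ⟨hk, hkT⟩
  · exact (le_of_not_ge hkT).trans hm.2

lemma exists_sigma (θ : ℤ) {f : ℤ → ℝ≥0∞} (hf : ∑' n, f n ≠ ⊤) :
    ∃ σ : ℤ → ℤ,
      (∀ n, f n ≤ f (σ n)) ∧
      (∀ n : ℤ, n ≤ θ → f (σ (n - 1)) ≤ f (σ n)) ∧
      (∀ n : ℤ, θ ≤ n → f (σ (n + 1)) ≤ f (σ n)) ∧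
      (∀ g : ℤ → ℝ≥0∞, (∀ n : ℤ, n ≤ θ → g (n - 1) ≤ g n) →
        (∀ n : ℤ, θ ≤ n → g (n + 1) ≤ g n) → ∀ n, g (σ n) ≤ g n) ∧
      (∀ m, {n : ℤ | σ n = m}.Finite) := by
  have hLex : ∀ n : ℤ, ∃ m ∈ Set.Iic n, ∀ k ∈ Set.Iic n, f k ≤ f m :=
    fun n => exists_max hf (Set.Iic n) (Set.mem_Iic.2 le_rfl)
  choose L hL1 hL2 using hLex
  have hRex : ∀ n : ℤ, ∃ m ∈ Set.Ici n, ∀ k ∈ Set.Ici n, f k ≤ f m :=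
    fun n => exists_max hf (Set.Ici n) (Set.mem_Ici.2 le_rfl)
  choose R hR1 hR2 using hRex
  obtain ⟨G, -, hG⟩ := exists_max hf Set.univ (Set.mem_univ θ)
  set σ : ℤ → ℤ := fun n => if n < θ then L n else if θ < n then R n else G with hσ
  have hlt : ∀ n, n < θ → σ n = L n := fun n h => by simp [hσ, h]
  have hgt : ∀ n, θ < n → σ n = R n := fun n h => by
    simp [hσ, h, not_lt_of_gt h]
  have hth : σ θ = G := by simp [hσ]
  have hloc : ∀ n, (n < θ ∧ σ n ≤ n) ∨ n = θ ∨ (θ < n ∧ n ≤ σ n) := by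
    intro n
    rcases lt_trichotomy n θ with h | h | h
    · exact Or.inl ⟨h, by rw [hlt n h]; exact hL1 n⟩
    · exact Or.inr (Or.inl h)
    · exact Or.inr (Or.inr ⟨h, by rw [hgt n h]; exact hR1 n⟩)
  refine ⟨σ, ?_, ?_, ?_, ?_, ?_⟩
  · intro n
    rcases lt_trichotomy n θ with h | h | h
    · rw [hlt n h]; exact hL2 n n (Set.mem_Iic.2 le_rfl)
    · rw [h, hth]; exact hG _ (Set.mem_univ _)
    · rw [hgt n h]; exact hR2 n n (Set.mem_Ici.2 le_rfl)
  · intro n hn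
    rcases eq_or_lt_of_le hn with h | h
    · rw [h, hth]; exact hG _ (Set.mem_univ _)
    · rw [hlt n h, hlt (n - 1) (by omega)]
      exact hL2 n (L (n - 1)) (Set.mem_Iic.2 ((hL1 (n - 1)).trans (by omega)))
  · intro n hn
    rcases eq_or_lt_of_le hn with h | h
    · rw [← h, hth]; exact hG _ (Set.mem_univ _)
    · rw [hgt n h, hgt (n + 1) (by omega)]
      exact hR2 n (R (n + 1)) (Set.mem_Ici.2 (le_trans (by omega) (hR1 (n + 1))))
  · intro g hg1 hg2 n
    rcases hloc n with ⟨h, hle⟩ | h | ⟨h, hle⟩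
    · exact mono_left hg1 hle (le_of_lt h)
    · rw [h]
      rcases le_total (σ θ) θ with h' | h'
      · exact mono_left hg1 h' le_rfl
      · exact mono_right hg2 h' le_rfl
    · exact mono_right hg2 hle (le_of_lt h)
  · intro m
    apply (Set.finite_Icc (min m θ) (max m θ)).subset
    intro n hn
    simp only [Set.mem_setOf_eq] at hn
    rcases hloc n with ⟨h, hle⟩ | h | ⟨h, hle⟩
    · rw [hn] at hle
      exact Set.mem_Icc.2 ⟨le_trans (min_le_left _ _) hle, le_trans (le_of_lt h) (le_max_right _ _)⟩
    · rw [h]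
      exact Set.mem_Icc.2 ⟨min_le_right _ _, le_max_right _ _⟩
    · rw [hn] at hle
      exact Set.mem_Icc.2 ⟨le_trans (min_le_right _ _) (le_of_lt h), le_trans hle (le_max_left _ _)⟩

lemma tsum_const_card {β : Type*} [Finite β] (c : ℝ≥0∞) :
    ∑' _ : β, c = (Nat.card β : ℝ≥0∞) * c := by
  cases nonempty_fintype β
  rw [tsum_fintype, Finset.sum_const, Nat.card_eq_fintype_card, nsmul_eq_mul]
  simp [Finset.card_univ]

lemma tsum_comp (σ : ℤ → ℤ) (hfib : ∀ m, {n : ℤ | σ n = m}.Finite) (g : ℤ → ℝ≥0∞) :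
    ∑' m : ℤ, (Nat.card {n : ℤ // σ n = m} : ℝ≥0∞) * g m = ∑' n, g (σ n) := by
  have h1 : ∑' n, g (σ n) = ∑' p : Σ m : ℤ, {n : ℤ // σ n = m}, g (σ (p.2 : ℤ)) :=
    ((Equiv.sigmaFiberEquiv σ).tsum_eq (fun n => g (σ n))).symm
  rw [h1, ENNReal.tsum_sigma']
  refine tsum_congr fun m => ?_
  haveI : Finite {n : ℤ // σ n = m} := hfib m
  calc (Nat.card {n : ℤ // σ n = m} : ℝ≥0∞) * g m
      = ∑' _ : {n : ℤ // σ n = m}, g m := (tsum_const_card _).symm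
    _ = ∑' p : {n : ℤ // σ n = m}, g (σ (p : ℤ)) := tsum_congr fun p => by rw [p.2]

lemma measure_univ_eq_tsum (P : Measure ℤ) : P Set.univ = ∑' n, P {n} := by
  rw [← Set.iUnion_of_singleton ℤ]
  exact measure_iUnion
    (fun i j hij => by simp [Function.onFun, Set.disjoint_singleton, hij])
    (fun i => measurableSet_singleton i)

noncomputable def ofMass (h : ℤ → ℝ≥0∞) : Measure ℤ := Measure.sum fun n => h n • Measure.dirac n

lemma ofMass_singleton (h : ℤ → ℝ≥0∞) (m : ℤ) : ofMass h {m} = h m := by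
  have key : ∀ n : ℤ, (h n • Measure.dirac n) ({m} : Set ℤ) = if n = m then h n else 0 := by
    intro n
    rw [Measure.smul_apply, smul_eq_mul, Measure.dirac_apply' _ (measurableSet_singleton m)]
    by_cases hn : n = m <;> simp [Set.indicator, hn]
  rw [ofMass, Measure.sum_apply _ (measurableSet_singleton m)]
  simp_rw [key]
  rw [tsum_eq_single m (fun b hb => by simp [hb])]
  simp

lemma ofMass_univ (h : ℤ → ℝ≥0∞) : ofMass h Set.univ = ∑' n, h n := by
  rw [ofMass, Measure.sum_apply _ MeasurableSet.univ]
  simp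

end Stmt5Aux

/-- **bipolar of `𝒟_θ`; strong testability of θ-unimodality.**
A measure `P` on `ℤ` satisfies `∑ₙ E(n) f_P(n) ≤ 1` for every e-value `E` for `𝒟_θ` iff
`P` is a subprobability dominated pointwise by some θ-unimodal probability.
Consequently a probability measure `Q` satisfies this for every e-value iff `Q ∈ 𝒟_θ`. -/
theorem stmt5 (θ : ℤ) :
    (∀ P : Measure ℤ,
      ((∀ E : ℤ → NNReal, IsEValueD θ E → ∑' n : ℤ, (E n : ℝ≥0∞) * P {n} ≤ 1) ↔
        (P Set.univ ≤ 1 ∧ ∃ P' ∈ UnimodalClass θ, ∀ n : ℤ, P {n} ≤ P' {n}))) ∧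
    (∀ Q : Measure ℤ, IsProbabilityMeasure Q →
      ((∀ E : ℤ → NNReal, IsEValueD θ E → ∑' n : ℤ, (E n : ℝ≥0∞) * Q {n} ≤ 1) ↔
        Q ∈ UnimodalClass θ)) := by
  have hone : IsEValueD θ (fun _ => 1) := by
    intro P' hP'
    simp only [ENNReal.coe_one, one_mul]
    rw [← Stmt5Aux.measure_univ_eq_tsum]
    exact le_of_eq hP'.1.measure_univ
  have part1 : ∀ P : Measure ℤ,
      ((∀ E : ℤ → NNReal, IsEValueD θ E → ∑' n : ℤ, (E n : ℝ≥0∞) * P {n} ≤ 1) ↔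
        (P Set.univ ≤ 1 ∧ ∃ P' ∈ UnimodalClass θ, ∀ n : ℤ, P {n} ≤ P' {n})) := by
    intro P
    constructor
    · intro H
      have hPuniv : P Set.univ ≤ 1 := by
        have := H _ hone
        simpa [Stmt5Aux.measure_univ_eq_tsum] using this
      have hf : ∑' n : ℤ, P {n} ≠ ⊤ := by
        rw [← Stmt5Aux.measure_univ_eq_tsum]
        exact ne_top_of_le_ne_top one_ne_top hPuniv
      obtain ⟨σ, hσ1, hσ2, hσ3, hσ4, hσ5⟩ := Stmt5Aux.exists_sigma θ hf
      set E : ℤ → NNReal := fun m => (Nat.card {n : ℤ // σ n = m} : NNReal) with hE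
      have key : ∀ g : ℤ → ℝ≥0∞, ∑' m : ℤ, (E m : ℝ≥0∞) * g m = ∑' n, g (σ n) := by
        intro g
        rw [← Stmt5Aux.tsum_comp σ hσ5 g]
        exact tsum_congr fun m => by rw [hE]; norm_cast
      have hEval : IsEValueD θ E := by
        intro P' hP'
        rw [show (fun n : ℤ => (E n : ℝ≥0∞) * P' {n}) = fun n : ℤ => (E n : ℝ≥0∞) * (fun k : ℤ => P' {k}) n from rfl,
          key fun k : ℤ => P' {k}]
        calc ∑' n : ℤ, P' {σ n} ≤ ∑' n : ℤ, P' {n} :=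
              ENNReal.tsum_le_tsum (hσ4 (fun k => P' {k}) hP'.2.1 hP'.2.2)
          _ = 1 := by rw [← Stmt5Aux.measure_univ_eq_tsum]; exact hP'.1.measure_univ
      have hS : ∑' n : ℤ, P {σ n} ≤ 1 := by
        rw [← key fun k : ℤ => P {k}]
        exact H E hEval
      set S : ℝ≥0∞ := ∑' n : ℤ, P {σ n} with hSdef
      set h' : ℤ → ℝ≥0∞ := fun n => P {σ n} + if n = θ then 1 - S else 0 with hh'
      have hsum' : ∑' n : ℤ, h' n = 1 := by
        simp only [hh']
        rw [ENNReal.tsum_add]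
        have hite : ∑' a : ℤ, (if a = θ then 1 - S else 0) = 1 - S := by
          rw [tsum_eq_single θ (fun b hb => if_neg hb), if_pos rfl]
        rw [hite, ← hSdef]
        exact add_tsub_cancel_of_le hS
      have hself : ∀ n : ℤ, P {σ n} ≤ h' n := fun n => by simp only [hh']; exact le_self_add
      have hP'mem : Stmt5Aux.ofMass h' ∈ UnimodalClass θ := by
        refine ⟨⟨by rw [Stmt5Aux.ofMass_univ]; exact hsum'⟩, ?_, ?_⟩
        · intro n hn
          rw [Stmt5Aux.ofMass_singleton, Stmt5Aux.ofMass_singleton]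
          have hne : n - 1 ≠ θ := by omega
          calc h' (n - 1) = P {σ (n - 1)} := by simp [hh', hne]
            _ ≤ P {σ n} := hσ2 n hn
            _ ≤ h' n := hself n
        · intro n hn
          rw [Stmt5Aux.ofMass_singleton, Stmt5Aux.ofMass_singleton]
          have hne : n + 1 ≠ θ := by omega
          calc h' (n + 1) = P {σ (n + 1)} := by simp [hh', hne]
            _ ≤ P {σ n} := hσ3 n hn
            _ ≤ h' n := hself n
      refine ⟨hPuniv, Stmt5Aux.ofMass h', hP'mem, fun n => ?_⟩
      rw [Stmt5Aux.ofMass_singleton]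
      exact (hσ1 n).trans (hself n)
    · rintro ⟨hP1, P', hP', hdom⟩ E hE
      calc ∑' n : ℤ, (E n : ℝ≥0∞) * P {n}
          ≤ ∑' n : ℤ, (E n : ℝ≥0∞) * P' {n} :=
            ENNReal.tsum_le_tsum fun n => mul_le_mul_right (hdom n) _
        _ ≤ 1 := hE P' hP'
  refine ⟨part1, fun Q hQ => ?_⟩
  constructor
  · intro H
    obtain ⟨-, P', hP', hdom⟩ := (part1 Q).mp H
    have hQt : ∑' n : ℤ, Q {n} = 1 := by
      rw [← Stmt5Aux.measure_univ_eq_tsum]; exact hQ.measure_univ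
    have hsums : ∑' n : ℤ, Q {n} = ∑' n : ℤ, P' {n} := by
      rw [hQt, ← Stmt5Aux.measure_univ_eq_tsum]
      exact hP'.1.measure_univ.symm
    have heq : ∀ n : ℤ, Q {n} = P' {n} := by
      by_contra hc
      push_neg at hc
      obtain ⟨k, hk⟩ := hc
      have hlt : Q {k} < P' {k} := (hdom k).lt_of_ne hk
      exact absurd hsums
        (ENNReal.tsum_lt_tsum (by rw [hQt]; exact one_ne_top) hdom hlt).ne
    exact ⟨hQ, fun n hn => by rw [heq, heq]; exact hP'.2.1 n hn,
      fun n hn => by rw [heq, heq]; exact hP'.2.2 n hn⟩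
  · intro hQmem E hE
    exact hE Q hQmem
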